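/- Let G be a matrix-weighted network containing a positive-negative spanning tree (a spanning tree all of whose edge weights are positive definite or negative definite). Then any x in the null space of the matrix-valued Laplacian L satisfies, for every pair of nodes p, q, either x_p = x_q or x_p = −x_q; consequently x = D(1_n ⊗ w) for some gauge transformation D and some w ∈ ℝ^d. -/

import Mathlib

open Matrix

/-- The per-ordered-pair contribution to the quadratic form `xᵀ L x`. -/
def fterm {n d : ℕ} (A : Fin n → Fin n → Matrix (Fin d) (Fin d) ℝ)
    (s : Fin n → Fin n → ℝ) (x : Fin n × Fin d → ℝ) (i k : Fin n) : ℝ :=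
  s i k * ((fun a => x (i,a)) ⬝ᵥ (A i k).mulVec (fun a => x (i,a)))
    - (fun a => x (i,a)) ⬝ᵥ (A i k).mulVec (fun a => x (k,a))

lemma gterm_pos {n d : ℕ} (A : Fin n → Fin n → Matrix (Fin d) (Fin d) ℝ)
    (s : Fin n → Fin n → ℝ) (x : Fin n × Fin d → ℝ) (i k : Fin n)
    (hA : A k i = A i k) (hsym : s k i = s i k) (h1 : s i k = 1) :
    fterm A s x i k + fterm A s x k i
      = ((fun a => x (i,a)) - fun a => x (k,a)) ⬝ᵥ
          (A i k).mulVec ((fun a => x (i,a)) - fun a => x (k,a)) := by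
  simp only [fterm, hA, hsym, h1, Matrix.mulVec_sub, sub_dotProduct,
    dotProduct_sub]
  ring

lemma gterm_neg {n d : ℕ} (A : Fin n → Fin n → Matrix (Fin d) (Fin d) ℝ)
    (s : Fin n → Fin n → ℝ) (x : Fin n × Fin d → ℝ) (i k : Fin n)
    (hA : A k i = A i k) (hsym : s k i = s i k) (h1 : s i k = -1) :
    fterm A s x i k + fterm A s x k i
      = ((fun a => x (i,a)) + fun a => x (k,a)) ⬝ᵥ
          (-(A i k)).mulVec ((fun a => x (i,a)) + fun a => x (k,a)) := by
  simp only [fterm, hA, hsym, h1, Matrix.mulVec_add, add_dotProduct,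
    dotProduct_add, Matrix.neg_mulVec, dotProduct_neg]
  ring

lemma key_sum {n d : ℕ} (A : Fin n → Fin n → Matrix (Fin d) (Fin d) ℝ)
    (s : Fin n → Fin n → ℝ) (hAii : ∀ i, A i i = 0) (x : Fin n × Fin d → ℝ)
    (L : Matrix (Fin n × Fin d) (Fin n × Fin d) ℝ)
    (hL : L = Matrix.of fun p q =>
      if p.1 = q.1 then (∑ k, s p.1 k • A p.1 k) p.2 q.2 else -(A p.1 q.1 p.2 q.2)) :
    x ⬝ᵥ L.mulVec x = ∑ i, ∑ k, fterm A s x i k := by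
  have hL' : ∀ (i j : Fin n) (a b : Fin d), L (i,a) (j,b) =
      (if i = j then ∑ k, s i k * A i k a b else 0) - A i j a b := by
    intro i j a b
    subst hL
    by_cases h : i = j
    · subst h
      simp [hAii, Matrix.sum_apply]
    · simp [h]
  have step1 : x ⬝ᵥ L.mulVec x = ∑ i, ∑ a, x (i,a) * (∑ j, ∑ b,
          ((if i = j then ∑ k, s i k * A i k a b else 0) - A i j a b) * x (j,b)) := by
    simp only [dotProduct, Matrix.mulVec]
    rw [Fintype.sum_prod_type]
    refine Finset.sum_congr rfl fun i _ => Finset.sum_congr rfl fun a _ => ?_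
    congr 1
    rw [Fintype.sum_prod_type]
    refine Finset.sum_congr rfl fun j _ => Finset.sum_congr rfl fun b _ => ?_
    rw [← hL' i j a b]
  rw [step1]
  refine Finset.sum_congr rfl fun i _ => ?_
  simp only [fterm, dotProduct, Matrix.mulVec, sub_mul, ite_mul, zero_mul,
    Finset.sum_sub_distrib, Finset.sum_ite_irrel, Finset.sum_ite_eq, Finset.mem_univ, if_true,
    mul_sub, Finset.mul_sum, Finset.sum_mul, Finset.sum_const_zero, mul_ite, mul_zero]
  congr 1
  · rw [show (∑ a : Fin d, ∑ b : Fin d, ∑ k : Fin n, x (i, a) * (s i k * A i k a b * x (i, b)))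
        = ∑ a : Fin d, ∑ k : Fin n, ∑ b : Fin d, x (i, a) * (s i k * A i k a b * x (i, b)) from
        Finset.sum_congr rfl fun a _ => Finset.sum_comm, Finset.sum_comm]
    refine Finset.sum_congr rfl fun k _ => Finset.sum_congr rfl fun a _ =>
      Finset.sum_congr rfl fun b _ => by ring
  · rw [Finset.sum_comm]

/-- For a matrix-weighted network containing a positive-negative spanning
tree `T` (a connected spanning subgraph all of whose edge weights are positive or
negative definite), every `x` in the null space of the matrix-valued Laplacian `L`
satisfies `x_p = x_q` or `x_p = −x_q` for all nodes `p, q`; consequently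
`x = D(1_n ⊗ w)` for some gauge transformation `D` and some `w ∈ ℝ^d`. -/
theorem pn_spanning_tree_nullspace_gauge_form {n d : ℕ}
    (E : Fin n → Fin n → Prop)
    (hEsymm : ∀ i j, E i j → E j i) (hEirr : ∀ i, ¬ E i i)
    (A : Fin n → Fin n → Matrix (Fin d) (Fin d) ℝ)
    (hAsymm : ∀ i j, A i j = A j i)
    (hA0 : ∀ i j, ¬ E i j → A i j = 0)
    (s : Fin n → Fin n → ℝ) (hssymm : ∀ i j, s i j = s j i)
    (hs : ∀ i j, E i j →
      (s i j = 1 ∧ (A i j).PosSemidef) ∨ (s i j = -1 ∧ (-(A i j)).PosSemidef))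
    -- the positive-negative spanning tree
    (T : Fin n → Fin n → Prop)
    (hTsymm : ∀ i j, T i j → T j i) (hTE : ∀ i j, T i j → E i j)
    (hTdef : ∀ i j, T i j → (A i j).PosDef ∨ (-(A i j)).PosDef)
    (hTconn : ∀ p q : Fin n, Relation.ReflTransGen T p q)
    (L : Matrix (Fin n × Fin d) (Fin n × Fin d) ℝ)
    (hL : L = Matrix.of fun p q =>
      if p.1 = q.1 then (∑ k, s p.1 k • A p.1 k) p.2 q.2 else -(A p.1 q.1 p.2 q.2))
    (x : Fin n × Fin d → ℝ) (hx : L.mulVec x = 0) :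
    (∀ p q : Fin n,
        (fun a => x (p, a)) = (fun a => x (q, a)) ∨
        (fun a => x (p, a)) = fun a => -x (q, a)) ∧
    ∃ (σ : Fin n → ℝ) (w : Fin d → ℝ),
      (∀ i, σ i = 1 ∨ σ i = -1) ∧ x = fun p => σ p.1 * w p.2 := by
  classical
  rcases Nat.eq_zero_or_pos d with hd | hd
  · subst hd
    constructor
    · intro p q; left; funext a; exact a.elim0
    · exact ⟨fun _ => 1, fun a => a.elim0, fun i => Or.inl rfl, by funext p; exact p.2.elim0⟩
  have hAii : ∀ i, A i i = 0 := fun i => hA0 i i (hEirr i)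
  -- the quadratic form vanishes
  have hsum : ∑ i, ∑ k, fterm A s x i k = 0 := by
    rw [← key_sum A s hAii x L hL, hx, dotProduct_zero]
  -- symmetrized terms are nonnegative
  have hgnonneg : ∀ i k : Fin n, 0 ≤ fterm A s x i k + fterm A s x k i := by
    intro i k
    by_cases hE : E i k
    · rcases hs i k hE with ⟨h1, hPSD⟩ | ⟨h1, hPSD⟩
      · rw [gterm_pos A s x i k (hAsymm k i) (hssymm k i) h1]
        have h3 := hPSD.dotProduct_mulVec_nonneg ((fun a => x (i,a)) - fun a => x (k,a))
        simpa using h3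
      · rw [gterm_neg A s x i k (hAsymm k i) (hssymm k i) h1]
        have h3 := hPSD.dotProduct_mulVec_nonneg ((fun a => x (i,a)) + fun a => x (k,a))
        simpa using h3
    · have hAz : A i k = 0 := hA0 _ _ hE
      have hAz' : A k i = 0 := (hAsymm k i).trans hAz
      simp [fterm, hAz, hAz']
  -- each symmetrized term is zero
  have hg0 : ∀ i k : Fin n, fterm A s x i k + fterm A s x k i = 0 := by
    have hsumg : (∑ p : Fin n × Fin n, (fterm A s x p.1 p.2 + fterm A s x p.2 p.1)) = 0 := by
      rw [Fintype.sum_prod_type]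
      have h2 : ∑ i, ∑ k, (fterm A s x i k + fterm A s x k i)
          = (∑ i, ∑ k, fterm A s x i k) + (∑ i, ∑ k, fterm A s x k i) := by
        simp [Finset.sum_add_distrib]
      rw [h2, hsum, show (∑ i, ∑ k, fterm A s x k i) = ∑ i, ∑ k, fterm A s x i k from
        Finset.sum_comm, hsum, add_zero]
    intro i k
    exact (Finset.sum_eq_zero_iff_of_nonneg
      (fun p _ => hgnonneg p.1 p.2)).mp hsumg (i, k) (Finset.mem_univ _)
  -- a nonzero test vector (d > 0)
  set y0 : Fin d → ℝ := Pi.single ⟨0, hd⟩ 1 with hy0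
  have hy0ne : y0 ≠ 0 := by
    intro h
    have := congrFun h ⟨0, hd⟩
    simp [hy0] at this
  -- along tree edges, x_i = ± x_j
  have htree : ∀ i j, T i j →
      (∀ a, x (i,a) = x (j,a)) ∨ (∀ a, x (i,a) = - x (j,a)) := by
    intro i j hT
    have hE := hTE i j hT
    rcases hTdef i j hT with hPD | hPD
    · -- A i j positive definite: then s i j = 1
      have h1 : s i j = 1 := by
        rcases hs i j hE with ⟨h1, _⟩ | ⟨_, hPSD⟩
        · exact h1
        · exfalso
          have ha := hPD.dotProduct_mulVec_pos hy0ne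
          have hb := hPSD.dotProduct_mulVec_nonneg y0
          simp only [Matrix.neg_mulVec, dotProduct_neg, star_trivial] at ha hb
          linarith [ha, hb]
      have hq : ((fun a => x (i,a)) - fun a => x (j,a)) ⬝ᵥ
          (A i j).mulVec ((fun a => x (i,a)) - fun a => x (j,a)) = 0 := by
        rw [← gterm_pos A s x i j (hAsymm j i) (hssymm j i) h1]
        exact hg0 i j
      left
      have hzero : ((fun a => x (i,a)) - fun a => x (j,a)) = 0 := by
        by_contra hne
        have := hPD.dotProduct_mulVec_pos hne
        simp only [star_trivial] at this
        rw [hq] at this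
        exact lt_irrefl 0 (by simpa using this)
      intro a
      have := congrFun hzero a
      simpa [sub_eq_zero] using this
    · -- -(A i j) positive definite: then s i j = -1
      have h1 : s i j = -1 := by
        rcases hs i j hE with ⟨_, hPSD⟩ | ⟨h1, _⟩
        · exfalso
          have ha := hPD.dotProduct_mulVec_pos hy0ne
          have hb := hPSD.dotProduct_mulVec_nonneg y0
          simp only [Matrix.neg_mulVec, dotProduct_neg, star_trivial] at ha hb
          linarith [ha, hb]
        · exact h1
      have hq : ((fun a => x (i,a)) + fun a => x (j,a)) ⬝ᵥ
          (-(A i j)).mulVec ((fun a => x (i,a)) + fun a => x (j,a)) = 0 := by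
        rw [← gterm_neg A s x i j (hAsymm j i) (hssymm j i) h1]
        exact hg0 i j
      right
      have hzero : ((fun a => x (i,a)) + fun a => x (j,a)) = 0 := by
        by_contra hne
        have := hPD.dotProduct_mulVec_pos hne
        simp only [star_trivial] at this
        rw [hq] at this
        exact lt_irrefl 0 (by simpa using this)
      intro a
      have := congrFun hzero a
      have h' : x (i,a) + x (j,a) = 0 := by simpa using this
      linarith
  -- propagate along the tree
  have hR : ∀ p q : Fin n, Relation.ReflTransGen T p q →
      (∀ a, x (p,a) = x (q,a)) ∨ (∀ a, x (p,a) = - x (q,a)) := by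
    intro p q h
    induction h with
    | refl => exact Or.inl fun a => rfl
    | tail _ ht ih =>
      rcases ih with h1 | h1 <;> rcases htree _ _ ht with h2 | h2
      · left; intro a; rw [h1 a, h2 a]
      · right; intro a; rw [h1 a, h2 a]
      · right; intro a; rw [h1 a, h2 a]
      · left; intro a; rw [h1 a, h2 a]; ring
  constructor
  · intro p q
    rcases hR p q (hTconn p q) with h | h
    · left; funext a; exact h a
    · right; funext a; exact h a
  · rcases Nat.eq_zero_or_pos n with hn | hn
    · refine ⟨fun _ => 1, fun _ => 0, fun i => Or.inl rfl, ?_⟩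
      funext p
      exact absurd (hn ▸ p.1 : Fin 0).isLt (by simp)
    · set i0 : Fin n := ⟨0, hn⟩
      refine ⟨fun i => if ∀ a, x (i,a) = x (i0,a) then 1 else -1, fun a => x (i0,a),
        fun i => ?_, ?_⟩
      · by_cases h : ∀ a, x (i,a) = x (i0,a)
        · left; simp only [if_pos h]
        · right; simp only [if_neg h]
      · funext p
        obtain ⟨i, a⟩ := p
        dsimp only
        by_cases h : ∀ b, x (i,b) = x (i0,b)
        · rw [if_pos h, one_mul]; exact h a
        · rw [if_neg h]
          rcases hR i i0 (hTconn i i0) with h1 | h1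
          · exact absurd h1 h
          · rw [h1 a]; ring
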